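/- Let I = I_Δ + I_s ⊂ S = k[x_0,…,x_r] be generated by quadratic monomials, where I_Δ is the squarefree part (the Stanley–Reisner ideal of a simplicial complex Δ) and I_s is generated by the squares x^2 of the 'square vertices'. Then I is saturated if and only if every maximal face (facet) of Δ contains at least one non-square vertex. -/

import Mathlib

attribute [local instance] Classical.propDecidable

/-- An abstract simplicial complex on vertex type `V`. -/
structure SComplex (V : Type) [DecidableEq V] where
  faces : Set (Finset V)
  empty_mem : ∅ ∈ faces
  down_closed : ∀ {s t : Finset V}, s ∈ faces → t ⊆ s → t ∈ faces

variable {V : Type} [DecidableEq V]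

/-- The full subcomplex of `Δ` on a vertex set `W`: all faces contained in `W`. -/
def SComplex.fullSub (Δ : SComplex V) (W : Set V) : SComplex V where
  faces := {s | s ∈ Δ.faces ∧ ↑s ⊆ W}
  empty_mem := ⟨Δ.empty_mem, by simp⟩
  down_closed := fun hs hts =>
    ⟨Δ.down_closed hs.1 hts, Set.Subset.trans (Finset.coe_subset.mpr hts) hs.2⟩

variable [Fintype V] [LinearOrder V]

/-- The space of simplicial `k`-chains of `Δ` supported on faces with `n` vertices
(i.e. of dimension `n-1`); for `n = 0` this is the span of the empty face, so the
resulting chain complex is the augmented (reduced) one. -/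
abbrev SComplex.chain (k : Type) [Field k] (Δ : SComplex V) (n : ℕ) : Type :=
  {F : Finset V // F ∈ Δ.faces ∧ F.card = n} → k

/-- The simplicial boundary operator from chains on faces with `n+1` vertices to
chains on faces with `n` vertices, with the usual alternating signs determined by
the linear order on the vertices. -/
noncomputable def SComplex.bdry (k : Type) [Field k] (Δ : SComplex V) (n : ℕ) :
    Δ.chain k (n+1) →ₗ[k] Δ.chain k n where
  toFun f G := ∑ v : V,
    if h : v ∉ G.1 ∧ insert v G.1 ∈ Δ.faces then
      (-1 : k) ^ (G.1.filter (fun u => u < v)).card *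
        f ⟨insert v G.1, h.2, by rw [Finset.card_insert_of_notMem h.1, G.2.2]⟩
    else 0
  map_add' f g := by
    funext G
    show (_ : k) = (_ : k) + (_ : k)
    rw [← Finset.sum_add_distrib]
    refine Finset.sum_congr rfl fun v _ => ?_
    by_cases h : v ∉ G.1 ∧ insert v G.1 ∈ Δ.faces
    · simp only [dif_pos h, Pi.add_apply]; ring
    · simp [dif_neg h]
  map_smul' c f := by
    funext G
    show _ = c * _
    rw [Finset.mul_sum]
    refine Finset.sum_congr rfl fun v _ => ?_
    by_cases h : v ∉ G.1 ∧ insert v G.1 ∈ Δ.faces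
    · simp only [dif_pos h, Pi.smul_apply, smul_eq_mul]; ring
    · simp [dif_neg h]

/-- The `i`-th reduced simplicial homology of `Δ` with coefficients in `k`:
cycles supported on faces with `i+1` vertices (dimension `i`) modulo boundaries.
(Since chains in degree 0 are spanned by the empty face, this is reduced homology.) -/
abbrev SComplex.redHomology (k : Type) [Field k] (Δ : SComplex V) (i : ℕ) :=
  LinearMap.ker (Δ.bdry k i) ⧸
    Submodule.comap (LinearMap.ker (Δ.bdry k i)).subtype
      (LinearMap.range (Δ.bdry k (i+1)))


lemma SComplex.exists_facet {V : Type} [DecidableEq V] [Fintype V] (Δ : SComplex V)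
    {F : Finset V} (hF : F ∈ Δ.faces) :
    ∃ G ∈ Δ.faces, F ⊆ G ∧ ∀ G' ∈ Δ.faces, G ⊆ G' → G' = G := by
  classical
  obtain ⟨G, hG, hmax⟩ := Set.Finite.exists_maximalFor Finset.card
    {G | G ∈ Δ.faces ∧ F ⊆ G} (Set.toFinite _) ⟨F, hF, subset_rfl⟩
  refine ⟨G, hG.1, hG.2, fun G' hG' hsub => ?_⟩
  exact (Finset.eq_of_subset_of_card_le hsub
    (hmax (show G' ∈ {G | G ∈ Δ.faces ∧ F ⊆ G} from ⟨hG', hG.2.trans hsub⟩) (Finset.card_le_card hsub))).symm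

open MvPolynomial in
/-- let `I = I_Δ + I_s ⊆ S = k[x_0, …, x_r]` be an ideal generated
by quadratic monomials, where `I_Δ` is the Stanley–Reisner ideal of the
simplicial complex `Δ` (every vertex a face, and `Δ` a clique complex so that
`I_Δ` is quadratic) and `I_s` is generated by the squares `x_v²` of the square
vertices `v ∈ sq`. Then `I` is saturated — `(I : (x_0, …, x_r)) = I` — if and
only if every maximal face (facet) of `Δ` contains at least one non-square
vertex. -/
theorem statement_18 (k : Type) [Field k] {r : ℕ} (Δ : SComplex (Fin (r + 1)))
    (sq : Set (Fin (r + 1)))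
    (hvert : ∀ v : Fin (r + 1), ({v} : Finset (Fin (r + 1))) ∈ Δ.faces)
    (hclique : ∀ s : Finset (Fin (r + 1)),
      (∀ v ∈ s, ∀ w ∈ s, v ≠ w → ({v, w} : Finset (Fin (r + 1))) ∈ Δ.faces) →
      s ∈ Δ.faces) :
    letI S := MvPolynomial (Fin (r + 1)) k
    letI IΔ : Ideal S := Ideal.span {m | ∃ s : Finset (Fin (r + 1)),
        s ∉ Δ.faces ∧ m = s.prod (fun v => X v)}
    letI I : Ideal S := IΔ ⊔ Ideal.span ((fun v => X v ^ 2) '' sq)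
    (I.colon (Ideal.span (Set.range (X : Fin (r + 1) → S))) = I ↔
      ∀ F ∈ Δ.faces, (∀ G ∈ Δ.faces, F ⊆ G → G = F) → ∃ v ∈ F, v ∉ sq) := by
  classical
  set S : Type := MvPolynomial (Fin (r + 1)) k with hS
  set I : Ideal S :=
    Ideal.span {m | ∃ s, s ∉ Δ.faces ∧ m = s.prod fun v => X v} ⊔
      Ideal.span ((fun v => X v ^ 2) '' sq) with hIdef
  set e : Finset (Fin (r + 1)) → (Fin (r + 1) →₀ ℕ) :=
    fun s => ∑ v ∈ s, Finsupp.single v 1 with he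
  have he_apply : ∀ (s : Finset (Fin (r + 1))) (u), e s u = if u ∈ s then 1 else 0 := by
    intro s u
    simp [he, Finsupp.finset_sum_apply, Finsupp.single_apply]
  set E : Set (Fin (r + 1) →₀ ℕ) :=
    (e '' {s | s ∉ Δ.faces}) ∪ ((fun v => Finsupp.single v 2) '' sq) with hE
  have hprod : ∀ s : Finset (Fin (r + 1)),
      s.prod (fun v => X v) = (monomial (e s) (1 : k) : S) := by
    intro s
    rw [he, monomial_sum_one]
    rfl
  have hI : I = Ideal.span ((fun a => (monomial a (1 : k) : S)) '' E) := by
    have h1 : {m : S | ∃ s, s ∉ Δ.faces ∧ m = s.prod fun v => X v}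
        = (fun a => (monomial a (1 : k) : S)) '' (e '' {s | s ∉ Δ.faces}) := by
      ext m
      constructor
      · rintro ⟨s, hs, rfl⟩
        exact ⟨e s, ⟨s, hs, rfl⟩, (hprod s).symm⟩
      · rintro ⟨a, ⟨s, hs, rfl⟩, rfl⟩
        exact ⟨s, hs, (hprod s).symm⟩
    have h2 : ((fun v => X v ^ 2) '' sq : Set S)
        = (fun a => (monomial a (1 : k) : S)) '' ((fun v => Finsupp.single v 2) '' sq) := by
      rw [Set.image_image]
      exact Set.image_congr fun v _ => X_pow_eq_monomial
    show Ideal.span _ ⊔ Ideal.span _ = _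
    rw [h1, h2, ← Ideal.span_union, ← Set.image_union, hE]
  have hmem : ∀ f : S, f ∈ I ↔ ∀ b ∈ f.support, ∃ a ∈ E, a ≤ b := by
    intro f
    rw [hI]
    exact mem_ideal_span_monomial_image
  have hcolon : ∀ f : S,
      f ∈ I.colon (Ideal.span (Set.range (X : Fin (r + 1) → S))) ↔
        ∀ v, f * X v ∈ I := by
    intro f
    constructor
    · intro h v
      exact Submodule.mem_colon.mp h (X v) (Ideal.subset_span ⟨v, rfl⟩)
    · intro h
      rw [Submodule.mem_colon]
      intro p hp
      induction hp using Submodule.span_induction with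
      | mem x hx => obtain ⟨v, rfl⟩ := hx; exact h v
      | zero => simpa using I.zero_mem
      | add x y hx hy ihx ihy => simpa [mul_add] using I.add_mem ihx ihy
      | smul c x hx ih =>
        have : f * (c * x) = c * (f * x) := by ring
        simpa [smul_eq_mul, this] using I.mul_mem_left c ih
  -- a monomial is in `I` iff some generator exponent is below its exponent
  have hmono_mem : ∀ b : Fin (r + 1) →₀ ℕ,
      (monomial b (1 : k) : S) ∈ I ↔ ∃ a ∈ E, a ≤ b := by
    intro b
    rw [hmem]
    simp [support_monomial]
  constructor
  · -- saturated → every facet has a non-square vertex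
    intro hsat F hF hFmax
    by_contra hno
    push_neg at hno
    have hfI : (monomial (e F) (1 : k) : S) ∈ I := by
      rw [← hsat, hcolon]
      intro v
      have hxv : (X v : S) = monomial (Finsupp.single v 1) 1 := rfl
      have : (monomial (e F) (1 : k) : S) * X v
          = monomial (e F + Finsupp.single v 1) 1 := by
        rw [hxv, monomial_mul, mul_one]
      rw [this, hmono_mem]
      by_cases hv : v ∈ F
      · refine ⟨Finsupp.single v 2, Or.inr ⟨v, hno v hv, rfl⟩, ?_⟩
        rw [Finsupp.le_def]
        intro u
        rcases eq_or_ne u v with rfl | hne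
        · simp [Finsupp.single_apply, Finsupp.add_apply, he_apply, hv]
        · simp [Finsupp.single_apply, hne.symm]
      · have hins : insert v F ∉ Δ.faces := by
          intro hmem'
          exact hv (hFmax _ hmem' (Finset.subset_insert v F) ▸ Finset.mem_insert_self v F)
        refine ⟨e (insert v F), Or.inl ⟨insert v F, hins, rfl⟩, ?_⟩
        rw [Finsupp.le_def]
        intro u
        rcases eq_or_ne u v with rfl | hne
        · simp [he_apply, Finsupp.add_apply, Finsupp.single_apply, hv]
        · simp [he_apply, Finsupp.add_apply, Finsupp.single_apply, hne.symm,
            Finset.mem_insert, hne]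
    rw [hmono_mem] at hfI
    obtain ⟨a, haE, hle⟩ := hfI
    rw [Finsupp.le_def] at hle
    rcases haE with ⟨s, hs, rfl⟩ | ⟨v, hv, rfl⟩
    · have hsF : s ⊆ F := by
        intro u hu
        have := hle u
        rw [he_apply, he_apply, if_pos hu] at this
        by_contra hmem'
        rw [if_neg hmem'] at this
        omega
      exact hs (Δ.down_closed hF hsF)
    · have := hle v
      rw [Finsupp.single_apply, if_pos rfl, he_apply] at this
      split at this <;> omega
  · -- every facet has a non-square vertex → saturated
    intro hfacet
    refine le_antisymm (fun f hf => ?_)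
      (fun x hx => Submodule.mem_colon.mpr fun p _ => by simpa only [smul_eq_mul, mul_comm] using I.mul_mem_right p hx)
    rw [hmem]
    intro b hb
    set F : Finset (Fin (r + 1)) := b.support with hFdef
    have hFb : ∀ u ∈ F, 1 ≤ b u := by
      intro u hu
      have := Finsupp.mem_support_iff.mp hu
      omega
    by_cases hFface : F ∈ Δ.faces
    · by_cases hsq2 : ∃ v ∈ sq, 2 ≤ b v
      · obtain ⟨v, hv, h2⟩ := hsq2
        refine ⟨Finsupp.single v 2, Or.inr ⟨v, hv, rfl⟩, ?_⟩
        rw [Finsupp.le_def]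
        intro u
        rcases eq_or_ne u v with rfl | hne
        · simpa [Finsupp.single_apply] using h2
        · simp [Finsupp.single_apply, hne.symm]
      · push_neg at hsq2
        obtain ⟨G, hGface, hFG, hGmax⟩ := Δ.exists_facet hFface
        obtain ⟨w, hwG, hwsq⟩ := hfacet G hGface hGmax
        have hfw : f * X w ∈ I := (hcolon f).mp hf w
        rw [hmem] at hfw
        have hb' : Finsupp.single w 1 + b ∈ (f * X w).support := by
          rw [MvPolynomial.mem_support_iff, mul_comm, coeff_X_mul]
          exact Finsupp.mem_support_iff.mp hb
        obtain ⟨a, haE, hle⟩ := hfw _ hb'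
        rw [Finsupp.le_def] at hle
        exfalso
        rcases haE with ⟨s, hs, rfl⟩ | ⟨v, hv, rfl⟩
        · have hsG : s ⊆ G := by
            intro u hu
            have := hle u
            rw [he_apply, if_pos hu, Finsupp.add_apply, Finsupp.single_apply] at this
            rcases eq_or_ne u w with rfl | hne
            · exact hwG
            · rw [if_neg (Ne.symm hne)] at this
              exact hFG (Finsupp.mem_support_iff.mpr (by omega))
          exact hs (Δ.down_closed hGface hsG)
        · have := hle v
          have hvw : v ≠ w := fun h => hwsq (h ▸ hv)
          rw [Finsupp.single_apply, if_pos rfl, Finsupp.add_apply,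
            Finsupp.single_apply, if_neg (Ne.symm hvw)] at this
          have := hsq2 v hv
          omega
    · refine ⟨e F, Or.inl ⟨F, hFface, rfl⟩, ?_⟩
      rw [Finsupp.le_def]
      intro u
      rw [he_apply]
      by_cases hu : u ∈ F
      · rw [if_pos hu]; exact hFb u hu
      · simp [hu]
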